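/- Let M be a symmetric PSD matrix of the form M = Σ_{k=1}^K p_k y_k y_k^T where p_k > 0 and y_k ∈ R^S are unit vectors, and let M̂ be any symmetric matrix with ||M̂ − M|| ≤ ε (operator norm). Let V V^T be the orthogonal projector onto the top-K eigenspace of M̂. Then for each k, ||y_k − V V^T y_k||₂² ≤ 2Kε / p_k. -/

import Mathlib

open Matrix

private lemma euc_sum_apply {ι : Type*} {S : ℕ} (s : Finset ι)
    (f : ι → EuclideanSpace ℝ (Fin S)) (i : Fin S) :
    (∑ l ∈ s, f l) i = ∑ l ∈ s, f l i := by
  induction s using Finset.cons_induction with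
  | empty => rfl
  | cons a s h ih => rw [Finset.sum_cons, Finset.sum_cons, ← ih]; rfl

private lemma dot_sum' {ι : Type*} {S : ℕ} (s : Finset ι) (x : Fin S → ℝ)
    (f : ι → Fin S → ℝ) : x ⬝ᵥ (∑ l ∈ s, f l) = ∑ l ∈ s, x ⬝ᵥ f l := by
  simp only [dotProduct, Finset.sum_apply, Finset.mul_sum]
  exact Finset.sum_comm

private lemma sum_dot' {ι : Type*} {S : ℕ} (s : Finset ι) (x : Fin S → ℝ)
    (f : ι → Fin S → ℝ) : (∑ l ∈ s, f l) ⬝ᵥ x = ∑ l ∈ s, f l ⬝ᵥ x := by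
  simp only [dotProduct, Finset.sum_apply, Finset.sum_mul]
  exact Finset.sum_comm

private lemma mulVec_sum' {ι : Type*} {S : ℕ} (s : Finset ι) (A : Matrix (Fin S) (Fin S) ℝ)
    (f : ι → Fin S → ℝ) : A *ᵥ (∑ l ∈ s, f l) = ∑ l ∈ s, A *ᵥ f l := by
  funext i
  simp only [mulVec, dotProduct, Finset.sum_apply, Finset.mul_sum]
  exact Finset.sum_comm

private lemma dot_self_eq {S : ℕ} (x : Fin S → ℝ) : x ⬝ᵥ x = ∑ i, x i ^ 2 := by
  simp [dotProduct, pow_two]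

theorem subspace_perturbation_bound (K S : ℕ) (ε : ℝ) (hε : 0 ≤ ε)
    (p : Fin K → ℝ) (hp : ∀ k, 0 < p k)
    (y : Fin K → (Fin S → ℝ)) (hy : ∀ k, ∑ i, (y k i) ^ 2 = 1)
    (Mhat : Matrix (Fin S) (Fin S) ℝ) (hHerm : Mhat.IsHermitian)
    (hclose : ∀ x : Fin S → ℝ,
      Real.sqrt (∑ i, ((Mhat *ᵥ x - (∑ k, p k • Matrix.of fun i j => y k i * y k j) *ᵥ x) i) ^ 2)
        ≤ ε * Real.sqrt (∑ i, (x i) ^ 2))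
    -- `T` indexes a set of `K` eigenvectors of `Mhat` with the largest eigenvalues
    (T : Finset (Fin S)) (hT : T.card = K)
    (htop : ∀ i ∈ T, ∀ j ∉ T, hHerm.eigenvalues j ≤ hHerm.eigenvalues i)
    -- `P` is the orthogonal projector onto the span of these top-`K` eigenvectors
    (P : Matrix (Fin S) (Fin S) ℝ)
    (hP : P = Matrix.of fun i j => ∑ l ∈ T, hHerm.eigenvectorBasis l i * hHerm.eigenvectorBasis l j) :
    ∀ k, ∑ i, ((y k - P *ᵥ y k) i) ^ 2 ≤ 2 * K * ε / p k := by
  intro k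
  set lam : Fin S → ℝ := hHerm.eigenvalues with hlam
  set v : Fin S → Fin S → ℝ := fun l => (hHerm.eigenvectorBasis l : EuclideanSpace ℝ (Fin S))
    with hv
  set M : Matrix (Fin S) (Fin S) ℝ := ∑ k, p k • Matrix.of fun i j => y k i * y k j with hM
  -- orthonormality of the eigenbasis
  have hon : ∀ l m, v l ⬝ᵥ v m = if l = m then 1 else 0 := by
    have h := hHerm.eigenvectorBasis.orthonormal
    rw [orthonormal_iff_ite] at h
    intro l m
    simpa [PiLp.inner_apply, RCLike.inner_apply, dotProduct, hv, mul_comm] using h l m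
  have heig : ∀ l, Mhat *ᵥ v l = lam l • v l := fun l => hHerm.mulVec_eigenvectorBasis l
  -- expansion of an arbitrary vector in the eigenbasis
  have hexp : ∀ x : Fin S → ℝ, x = ∑ l, (v l ⬝ᵥ x) • v l := by
    intro x
    have h := hHerm.eigenvectorBasis.sum_repr' (WithLp.toLp 2 x : EuclideanSpace ℝ (Fin S))
    funext i
    have h2 := congrFun (congrArg (fun z : EuclideanSpace ℝ (Fin S) => (z : Fin S → ℝ)) h) i
    simp only [PiLp.inner_apply, RCLike.inner_apply, conj_trivial] at h2
    rw [euc_sum_apply] at h2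
    simpa [dotProduct, PiLp.smul_apply, smul_eq_mul, Finset.sum_apply, hv, mul_comm] using h2.symm
  -- quadratic form of `M`
  have hMv : ∀ x : Fin S → ℝ, M *ᵥ x = ∑ m, (p m * (y m ⬝ᵥ x)) • y m := by
    intro x; funext i
    simp only [hM, mulVec, dotProduct, Finset.sum_apply, Pi.smul_apply, smul_eq_mul,
      Matrix.sum_apply, Matrix.smul_apply, Matrix.of_apply, Finset.sum_mul, Finset.mul_sum]
    rw [Finset.sum_comm]
    exact Finset.sum_congr rfl fun m _ => Finset.sum_congr rfl fun j _ => by ring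
  have hqM : ∀ x : Fin S → ℝ, x ⬝ᵥ (M *ᵥ x) = ∑ m, p m * (y m ⬝ᵥ x) ^ 2 := by
    intro x
    rw [hMv x, dot_sum']
    exact Finset.sum_congr rfl fun m _ => by
      rw [dotProduct_smul, smul_eq_mul, dotProduct_comm]; ring
  -- quadratic form of `Mhat` in eigencoordinates
  have hqMhat : ∀ x : Fin S → ℝ, x ⬝ᵥ (Mhat *ᵥ x) = ∑ l, lam l * (v l ⬝ᵥ x) ^ 2 := by
    intro x
    have h1 : Mhat *ᵥ x = ∑ l, (v l ⬝ᵥ x) • (lam l • v l) := by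
      conv_lhs => rw [hexp x]
      rw [mulVec_sum']
      exact Finset.sum_congr rfl fun l _ => by rw [mulVec_smul, heig l]
    rw [h1, dot_sum']
    exact Finset.sum_congr rfl fun l _ => by
      rw [dotProduct_smul, dotProduct_smul, smul_eq_mul, smul_eq_mul, dotProduct_comm]; ring
  -- Parseval
  have hpars : ∀ x : Fin S → ℝ, ∑ i, x i ^ 2 = ∑ l, (v l ⬝ᵥ x) ^ 2 := by
    intro x
    rw [← dot_self_eq]
    nth_rewrite 2 [hexp x]
    rw [dot_sum']
    exact Finset.sum_congr rfl fun l _ => by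
      rw [dotProduct_smul, smul_eq_mul, dotProduct_comm]; ring
  -- Cauchy–Schwarz perturbation bound
  have hCS : ∀ x : Fin S → ℝ, |x ⬝ᵥ (Mhat *ᵥ x) - x ⬝ᵥ (M *ᵥ x)| ≤ ε * ∑ i, x i ^ 2 := by
    intro x
    set z : Fin S → ℝ := Mhat *ᵥ x - M *ᵥ x with hz
    have h1 : x ⬝ᵥ (Mhat *ᵥ x) - x ⬝ᵥ (M *ᵥ x) = x ⬝ᵥ z := by rw [hz, dotProduct_sub]
    rw [h1]
    have hxs : (0:ℝ) ≤ ∑ i, x i ^ 2 := Finset.sum_nonneg fun i _ => sq_nonneg _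
    have hzs : (0:ℝ) ≤ ∑ i, z i ^ 2 := Finset.sum_nonneg fun i _ => sq_nonneg _
    have hcs : (x ⬝ᵥ z) ^ 2 ≤ (∑ i, x i ^ 2) * ∑ i, z i ^ 2 :=
      Finset.sum_mul_sq_le_sq_mul_sq _ _ _
    have h2 : |x ⬝ᵥ z| ≤ Real.sqrt ((∑ i, x i ^ 2) * ∑ i, z i ^ 2) := by
      rw [← Real.sqrt_sq_eq_abs]
      exact Real.sqrt_le_sqrt hcs
    have h3 : Real.sqrt ((∑ i, x i ^ 2) * ∑ i, z i ^ 2)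
        = Real.sqrt (∑ i, x i ^ 2) * Real.sqrt (∑ i, z i ^ 2) := Real.sqrt_mul hxs _
    have h4 : Real.sqrt (∑ i, z i ^ 2) ≤ ε * Real.sqrt (∑ i, x i ^ 2) := hclose x
    calc |x ⬝ᵥ z| ≤ Real.sqrt (∑ i, x i ^ 2) * Real.sqrt (∑ i, z i ^ 2) := h3 ▸ h2
      _ ≤ Real.sqrt (∑ i, x i ^ 2) * (ε * Real.sqrt (∑ i, x i ^ 2)) :=
          mul_le_mul_of_nonneg_left h4 (Real.sqrt_nonneg _)
      _ = ε * (Real.sqrt (∑ i, x i ^ 2) * Real.sqrt (∑ i, x i ^ 2)) := by ring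
      _ = ε * ∑ i, x i ^ 2 := by rw [Real.mul_self_sqrt hxs]
  -- all eigenvalues outside `T` are at most `ε`
  have hlamle : ∀ j, j ∉ T → lam j ≤ ε := by
    intro j hj
    set T' : Finset (Fin S) := insert j T with hT'
    have hcard : T'.card = K + 1 := by rw [hT', Finset.card_insert_of_notMem hj, hT]
    set B : Matrix (Fin K) {l // l ∈ T'} ℝ := Matrix.of fun m l => y m ⬝ᵥ v (l : Fin S) with hB
    have hnotinj : ¬ Function.Injective B.mulVecLin := by
      intro h
      have h1 := LinearMap.finrank_le_finrank_of_injective h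
      rw [Module.finrank_fintype_fun_eq_card, Module.finrank_fintype_fun_eq_card,
        Fintype.card_coe, hcard, Fintype.card_fin] at h1
      omega
    rw [Function.not_injective_iff] at hnotinj
    obtain ⟨a, b, hab, hne⟩ := hnotinj
    set c : {l // l ∈ T'} → ℝ := a - b with hc
    have hc0 : c ≠ 0 := sub_ne_zero.mpr hne
    have hBc : B *ᵥ c = 0 := by
      have : B.mulVecLin (a - b) = 0 := by rw [map_sub, hab, sub_self]
      simpa [Matrix.mulVecLin_apply] using this
    set w : Fin S → ℝ := ∑ l : {l // l ∈ T'}, c l • v (l : Fin S) with hw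
    have hyw : ∀ m, y m ⬝ᵥ w = 0 := by
      intro m
      have h0 : (B *ᵥ c) m = 0 := by rw [hBc]; rfl
      rw [hw, dot_sum']
      simp only [dotProduct_smul, smul_eq_mul]
      rw [← h0]
      simp only [mulVec, dotProduct, hB, Matrix.of_apply]
      exact Finset.sum_congr rfl fun l _ => by ring
    have hvw : ∀ m : {l // l ∈ T'}, w ⬝ᵥ v (m : Fin S) = c m := by
      intro m
      rw [hw, sum_dot']
      simp only [smul_dotProduct, smul_eq_mul, hon]
      rw [Finset.sum_eq_single m]
      · simp
      · intro l _ hlm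
        have : (l : Fin S) ≠ (m : Fin S) := fun h => hlm (Subtype.ext h)
        simp [this]
      · intro h; exact absurd (Finset.mem_univ m) h
    have hww : w ⬝ᵥ w = ∑ l : {l // l ∈ T'}, c l ^ 2 := by
      nth_rewrite 2 [hw]
      rw [dot_sum']
      exact Finset.sum_congr rfl fun l _ => by
        rw [dotProduct_smul, smul_eq_mul, hvw l]; ring
    have hwpos : 0 < w ⬝ᵥ w := by
      rw [hww]
      have : ∃ l, c l ≠ 0 := by
        by_contra h
        push_neg at h
        exact hc0 (funext h)
      obtain ⟨l, hl⟩ := this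
      exact Finset.sum_pos' (fun i _ => sq_nonneg _)
        ⟨l, Finset.mem_univ l, by positivity⟩
    have hwM : w ⬝ᵥ (M *ᵥ w) = 0 := by
      rw [hqM]
      exact Finset.sum_eq_zero fun m _ => by rw [hyw m]; ring
    have hwMhat : lam j * (w ⬝ᵥ w) ≤ w ⬝ᵥ (Mhat *ᵥ w) := by
      have h1 : Mhat *ᵥ w = ∑ l : {l // l ∈ T'}, c l • (lam (l : Fin S) • v (l : Fin S)) := by
        rw [hw, mulVec_sum']
        exact Finset.sum_congr rfl fun l _ => by rw [mulVec_smul, heig]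
      rw [hww, h1, dot_sum', Finset.mul_sum]
      refine Finset.sum_le_sum fun l _ => ?_
      rw [dotProduct_smul, dotProduct_smul, smul_eq_mul, smul_eq_mul, hvw l]
      have hll : lam j ≤ lam (l : Fin S) := by
        rcases Finset.mem_insert.mp l.2 with h | h
        · rw [h]
        · exact htop _ h _ hj
      nlinarith [sq_nonneg (c l)]
    have hclose' : w ⬝ᵥ (Mhat *ᵥ w) ≤ ε * (w ⬝ᵥ w) := by
      have h1 := hCS w
      rw [hwM, sub_zero] at h1
      rw [dot_self_eq]
      exact le_trans (le_abs_self _) h1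
    have := le_trans hwMhat hclose'
    exact le_of_mul_le_mul_right (by linarith) hwpos
  -- projector action
  have hPmul : ∀ x : Fin S → ℝ, P *ᵥ x = ∑ l ∈ T, (v l ⬝ᵥ x) • v l := by
    intro x; funext i
    simp only [hP, mulVec, dotProduct, Finset.sum_apply, Pi.smul_apply, smul_eq_mul,
      Matrix.of_apply, Finset.sum_mul, Finset.mul_sum]
    rw [Finset.sum_comm]
    exact Finset.sum_congr rfl fun l _ => Finset.sum_congr rfl fun j _ => by ring
  set r : Fin S → ℝ := y k - P *ᵥ y k with hr
  have hcrT : ∀ l ∈ T, v l ⬝ᵥ r = 0 := by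
    intro l hl
    rw [hr, dotProduct_sub, hPmul, dot_sum']
    simp only [dotProduct_smul, smul_eq_mul, hon]
    rw [Finset.sum_eq_single l]
    · simp
    · intro m _ hml
      simp [Ne.symm hml]
    · intro h; exact absurd hl h
  have hyr : y k ⬝ᵥ r = r ⬝ᵥ r := by
    have h1 : y k = r + P *ᵥ y k := by rw [hr]; ring_nf
    nth_rewrite 1 [h1]
    rw [add_dotProduct]
    have h2 : (P *ᵥ y k) ⬝ᵥ r = 0 := by
      rw [hPmul, sum_dot']
      exact Finset.sum_eq_zero fun l hl => by
        rw [smul_dotProduct, smul_eq_mul, hcrT l hl, mul_zero]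
    rw [h2, add_zero]
  set t : ℝ := ∑ i, r i ^ 2 with ht
  have htnn : 0 ≤ t := Finset.sum_nonneg fun i _ => sq_nonneg _
  have htr : r ⬝ᵥ r = t := dot_self_eq r
  -- p k t² ≤ rᵀ M r
  have hlow : p k * t ^ 2 ≤ r ⬝ᵥ (M *ᵥ r) := by
    rw [hqM]
    have : p k * t ^ 2 = p k * (y k ⬝ᵥ r) ^ 2 := by rw [hyr, htr]
    rw [this]
    exact Finset.single_le_sum (f := fun m => p m * (y m ⬝ᵥ r) ^ 2)
      (fun m _ => mul_nonneg (hp m).le (sq_nonneg _)) (Finset.mem_univ k)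
  -- rᵀ M̂ r ≤ ε t
  have hup1 : r ⬝ᵥ (Mhat *ᵥ r) ≤ ε * t := by
    rw [hqMhat, ht, hpars, Finset.mul_sum]
    refine Finset.sum_le_sum fun l _ => ?_
    by_cases hl : l ∈ T
    · rw [hcrT l hl]; simp
    · exact mul_le_mul_of_nonneg_right (hlamle l hl) (sq_nonneg _)
  have hup2 : r ⬝ᵥ (M *ᵥ r) ≤ r ⬝ᵥ (Mhat *ᵥ r) + ε * t := by
    have h1 := hCS r
    rw [abs_le] at h1
    rw [ht]
    linarith [h1.1]
  have hmain : p k * t ^ 2 ≤ 2 * ε * t := by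
    calc p k * t ^ 2 ≤ r ⬝ᵥ (M *ᵥ r) := hlow
      _ ≤ r ⬝ᵥ (Mhat *ᵥ r) + ε * t := hup2
      _ ≤ ε * t + ε * t := by linarith [hup1]
      _ = 2 * ε * t := by ring
  have hK1 : (1:ℝ) ≤ (K:ℝ) := by exact_mod_cast k.pos
  rw [le_div_iff₀ (hp k)]
  rcases eq_or_lt_of_le htnn with h0 | h0
  · rw [← h0, zero_mul]
    positivity
  · have h1 : p k * t ≤ 2 * ε := by
      have := (mul_le_mul_iff_of_pos_right h0).mpr (le_refl (1:ℝ))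
      nlinarith [hmain, h0]
    nlinarith [hp k, htnn, hε]
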